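/- Let μ > 0, L_c > 0 and b₁, b₂, b₃ > 0. Define W(X) := μ L_c² ( b₁‖sym X‖² + b₂‖skew X‖² + b₃ (tr X)² ) for X ∈ ℝ^{3×3}. Let G ∈ ℝ^{3×3} have vanishing third column (G_{i3} = 0 for i = 1,2,3), and for c ∈ ℝ³ let G(c) denote the matrix obtained from G by replacing the third column by c (i.e. G(c) = G + c eᵀ₃). Then the infimum over c ∈ ℝ³ of W(G(c)) is attained and equals μ L_c² ( b₁‖sym G_□‖² + b₂‖skew G_□‖² + (b₁b₃/(b₁+b₃)) (tr G_□)² + (2 b₁ b₂/(b₁+b₂)) (G₃₁² + G₃₂²) ), where G_□ ∈ ℝ^{2×2} is the upper-left 2×2 block of G. This is the homogenized curvature energy of the flat Cosserat-shell model. -/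
import Mathlib


open Matrix

noncomputable section

/-- Symmetric part of a matrix. -/
def msym {n : ℕ} (X : Matrix (Fin n) (Fin n) ℝ) : Matrix (Fin n) (Fin n) ℝ :=
  (1 / 2 : ℝ) • (X + Xᵀ)

/-- Skew-symmetric part of a matrix. -/
def mskew {n : ℕ} (X : Matrix (Fin n) (Fin n) ℝ) : Matrix (Fin n) (Fin n) ℝ :=
  (1 / 2 : ℝ) • (X - Xᵀ)

/-- Squared Frobenius norm `‖X‖² = tr(XᵀX)`. -/
def mnormSq {n : ℕ} (X : Matrix (Fin n) (Fin n) ℝ) : ℝ :=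
  Matrix.trace (Xᵀ * X)

/-- The upper-left 2×2 block of a 3×3 matrix. -/
def ulBlock (G : Matrix (Fin 3) (Fin 3) ℝ) : Matrix (Fin 2) (Fin 2) ℝ :=
  Matrix.of fun i j => G i.castSucc j.castSucc

lemma expand_sym (G : Matrix (Fin 3) (Fin 3) ℝ) (hG : ∀ i, G i 2 = 0) (c : Fin 3 → ℝ) :
    mnormSq (msym (G + vecMulVec c (Pi.single 2 1))) =
      G 0 0^2 + G 1 1^2 + c 2^2 + (G 0 1 + G 1 0)^2/2 + (c 0 + G 2 0)^2/2 + (c 1 + G 2 1)^2/2 := by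
  simp [mnormSq, msym, Matrix.trace, Matrix.mul_apply, Matrix.transpose_apply, vecMulVec,
    Fin.sum_univ_succ, Pi.single_apply, hG, Matrix.add_apply]
  ring

lemma expand_skew (G : Matrix (Fin 3) (Fin 3) ℝ) (hG : ∀ i, G i 2 = 0) (c : Fin 3 → ℝ) :
    mnormSq (mskew (G + vecMulVec c (Pi.single 2 1))) =
      (G 0 1 - G 1 0)^2/2 + (c 0 - G 2 0)^2/2 + (c 1 - G 2 1)^2/2 := by
  simp [mnormSq, mskew, Matrix.trace, Matrix.mul_apply, Matrix.transpose_apply, vecMulVec,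
    Fin.sum_univ_succ, Pi.single_apply, hG, Matrix.add_apply, Matrix.sub_apply]
  ring

lemma expand_tr (G : Matrix (Fin 3) (Fin 3) ℝ) (hG : ∀ i, G i 2 = 0) (c : Fin 3 → ℝ) :
    Matrix.trace (G + vecMulVec c (Pi.single 2 1)) = G 0 0 + G 1 1 + c 2 := by
  simp [Matrix.trace, Fin.sum_univ_succ, vecMulVec, Pi.single_apply, Matrix.add_apply,
    Matrix.diag]
  rw [hG 2]; ring

lemma expand_sym2 (G : Matrix (Fin 3) (Fin 3) ℝ) :
    mnormSq (msym (ulBlock G)) = G 0 0^2 + G 1 1^2 + (G 0 1 + G 1 0)^2/2 := by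
  simp [mnormSq, msym, ulBlock, Matrix.trace, Matrix.mul_apply, Matrix.transpose_apply,
    Fin.sum_univ_succ, Matrix.add_apply]
  norm_num [Fin.castSucc]
  ring

lemma expand_skew2 (G : Matrix (Fin 3) (Fin 3) ℝ) :
    mnormSq (mskew (ulBlock G)) = (G 0 1 - G 1 0)^2/2 := by
  simp [mnormSq, mskew, ulBlock, Matrix.trace, Matrix.mul_apply, Matrix.transpose_apply,
    Fin.sum_univ_succ, Matrix.sub_apply]
  norm_num [Fin.castSucc]
  ring

lemma expand_tr2 (G : Matrix (Fin 3) (Fin 3) ℝ) :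
    Matrix.trace (ulBlock G) = G 0 0 + G 1 1 := by
  simp [Matrix.trace, ulBlock, Fin.sum_univ_succ, Matrix.diag]


theorem stmt_9 (μ Lc b₁ b₂ b₃ : ℝ) (hμ : 0 < μ) (hL : 0 < Lc)
    (hb₁ : 0 < b₁) (hb₂ : 0 < b₂) (hb₃ : 0 < b₃)
    (G : Matrix (Fin 3) (Fin 3) ℝ) (hG : ∀ i, G i 2 = 0) :
    IsLeast
      (Set.range fun c : Fin 3 → ℝ =>
        μ * Lc ^ 2 *
          (b₁ * mnormSq (msym (G + vecMulVec c (Pi.single 2 1)))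
            + b₂ * mnormSq (mskew (G + vecMulVec c (Pi.single 2 1)))
            + b₃ * (Matrix.trace (G + vecMulVec c (Pi.single 2 1))) ^ 2))
      (μ * Lc ^ 2 *
        (b₁ * mnormSq (msym (ulBlock G))
          + b₂ * mnormSq (mskew (ulBlock G))
          + (b₁ * b₃ / (b₁ + b₃)) * (Matrix.trace (ulBlock G)) ^ 2
          + (2 * b₁ * b₂ / (b₁ + b₂)) * ((G 2 0) ^ 2 + (G 2 1) ^ 2))) := by
  have h12 : (0:ℝ) < b₁ + b₂ := by linarith
  have h13 : (0:ℝ) < b₁ + b₃ := by linarith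
  constructor
  · refine ⟨![G 2 0 * (b₂ - b₁) / (b₁ + b₂), G 2 1 * (b₂ - b₁) / (b₁ + b₂),
      -(b₃ * (G 0 0 + G 1 1)) / (b₁ + b₃)], ?_⟩
    beta_reduce
    rw [expand_sym G hG, expand_skew G hG, expand_tr G hG, expand_sym2, expand_skew2, expand_tr2]
    have : ∀ i : Fin 3, (![G 2 0 * (b₂ - b₁) / (b₁ + b₂), G 2 1 * (b₂ - b₁) / (b₁ + b₂),
        -(b₃ * (G 0 0 + G 1 1)) / (b₁ + b₃)] : Fin 3 → ℝ) i =
        ![G 2 0 * (b₂ - b₁) / (b₁ + b₂), G 2 1 * (b₂ - b₁) / (b₁ + b₂),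
        -(b₃ * (G 0 0 + G 1 1)) / (b₁ + b₃)] i := fun _ => rfl
    simp only [Matrix.cons_val_zero, Matrix.cons_val_one, Matrix.head_cons, Matrix.cons_val_two,
      Matrix.tail_cons]
    field_simp
    ring
  · rintro x ⟨c, rfl⟩
    simp only
    rw [expand_sym G hG, expand_skew G hG, expand_tr G hG, expand_sym2, expand_skew2, expand_tr2]
    have hq1 : ∀ g x : ℝ, 2 * b₁ * b₂ / (b₁ + b₂) * g ^ 2 ≤
        b₁ * ((x + g) ^ 2 / 2) + b₂ * ((x - g) ^ 2 / 2) := by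
      intro g x
      rw [div_mul_eq_mul_div, div_le_iff₀ h12]
      nlinarith [sq_nonneg ((b₁ + b₂) * x + (b₁ - b₂) * g)]
    have hq2 : b₁ * b₃ / (b₁ + b₃) * (G 0 0 + G 1 1) ^ 2 ≤
        b₁ * (c 2) ^ 2 + b₃ * (G 0 0 + G 1 1 + c 2) ^ 2 := by
      rw [div_mul_eq_mul_div, div_le_iff₀ h13]
      nlinarith [sq_nonneg ((b₁ + b₃) * c 2 + b₃ * (G 0 0 + G 1 1))]
    have h1 := hq1 (G 2 0) (c 0)
    have h2 := hq1 (G 2 1) (c 1)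
    have hpos : 0 < μ * Lc ^ 2 := by positivity
    apply mul_le_mul_of_nonneg_left _ hpos.le
    nlinarith [h1, h2, hq2]
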